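/- arXiv:1502.05252 — 2 statements merged into one kernel-verified Lean document; each statement's English description precedes it below -/
import Mathlib

section
/- If b ≥ 0, then for every real number r with 0 ≤ r ≤ b one has e₁(r) ≥ a₁(r), and equality e₁(r) = a₁(r) holds if and only if r = 0 or r = b. -/
/-- If `b ≥ 0`, then for every real `r` with `0 ≤ r ≤ b` one has
`e₁ r ≥ a₁ r`, with equality iff `r = 0` or `r = b`. -/
theorem stmt_3 (m : ℕ) (hm : 1 ≤ m) (p q : ℝ) (hp : 0 < p)
    (b : ℝ) (hb : b = (q / p) * (m + 1) / 2 + (m - 1) / 2)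
    (e₁ : ℝ → ℝ) (he₁ : ∀ x : ℝ, e₁ x = ((m - x) / m) * (1 + q / p))
    (c a₁ : ℝ → ℝ)
    (hc : ∀ r : ℝ, c r = 1 - (q / p) * (2 * r - m) / m)
    (ha₁ : ∀ r : ℝ, a₁ r = ((r + 1) / (2 * r + 1)) * c r)
    (hb0 : 0 ≤ b) :
    ∀ r : ℝ, 0 ≤ r → r ≤ b →
      e₁ r ≥ a₁ r ∧ (e₁ r = a₁ r ↔ r = 0 ∨ r = b) := by
  intro r hr0 hrb
  have hm' : (1:ℝ) ≤ (m:ℝ) := by exact_mod_cast hm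
  have hmpos : (0:ℝ) < (m:ℝ) := by linarith
  have h2r : (0:ℝ) < 2 * r + 1 := by linarith
  have hp' : p ≠ 0 := ne_of_gt hp
  have hm0 : (m:ℝ) ≠ 0 := ne_of_gt hmpos
  have h2r0 : (2 * r + 1) ≠ 0 := ne_of_gt h2r
  have key : e₁ r - a₁ r = 2 * r * (b - r) / ((m:ℝ) * (2 * r + 1)) := by
    rw [he₁, ha₁, hc, hb]
    field_simp
    ring
  have hden : (0:ℝ) < (m:ℝ) * (2 * r + 1) := by positivity
  have hnum : 0 ≤ 2 * r * (b - r) := by nlinarith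
  have hD : 0 ≤ e₁ r - a₁ r := by rw [key]; positivity
  refine ⟨by linarith, ?_, ?_⟩
  · intro h
    have h0 : 2 * r * (b - r) / ((m:ℝ) * (2 * r + 1)) = 0 := by
      rw [← key]; linarith
    have h1 : 2 * r * (b - r) = 0 := by
      rcases div_eq_zero_iff.mp h0 with h1 | h1
      · exact h1
      · exact absurd h1 (ne_of_gt hden)
    rcases mul_eq_zero.mp h1 with h2 | h2
    · left; linarith [mul_eq_zero.mp h2]
      
    · right; linarith
  · rintro (rfl | rfl) <;> simp at key <;> linarith
end

section
/- If b + 1 ≤ m, then for every real number r with b + 1 ≤ r ≤ m one has e₂(r) ≥ a₂(r), and equality e₂(r) = a₂(r) holds if and only if r = b + 1 or r = m. -/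
/-- If `b + 1 ≤ m`, then for every real `r` with `b + 1 ≤ r ≤ m`
one has `e₂ r ≥ a₂ r`, with equality iff `r = b + 1` or `r = m`. -/
theorem stmt_5 (m : ℕ) (hm : 1 ≤ m) (p q : ℝ) (hp : 0 < p)
    (b : ℝ) (hb : b = (q / p) * (m + 1) / 2 + (m - 1) / 2)
    (e₂ : ℝ → ℝ) (he₂ : ∀ x : ℝ, e₂ x = (x / m) * (1 - q / p))
    (c a₂ : ℝ → ℝ)
    (hc : ∀ r : ℝ, c r = 1 - (q / p) * (2 * r - m) / m)
    (ha₂ : ∀ r : ℝ, a₂ r = ((m - r + 1) / (2 * m - 2 * r + 1)) * c r)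
    (hbm : b + 1 ≤ m) :
    ∀ r : ℝ, b + 1 ≤ r → r ≤ m →
      e₂ r ≥ a₂ r ∧ (e₂ r = a₂ r ↔ r = b + 1 ∨ r = m) := by
  intro r h1 h2
  have hm' : (0:ℝ) < m := by exact_mod_cast hm
  have hD : (0:ℝ) < 2 * m - 2 * r + 1 := by linarith
  have hden : (0:ℝ) < (m : ℝ) * (2 * m - 2 * r + 1) := by positivity
  have key : e₂ r - a₂ r
      = 2 * (r - (b + 1)) * ((m:ℝ) - r) / ((m:ℝ) * (2 * m - 2 * r + 1)) := by
    rw [he₂, ha₂, hc, hb]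
    generalize hDd : 2 * (m:ℝ) - 2 * r + 1 = D at hD ⊢
    field_simp
    subst hDd
    ring
  constructor
  · have h0 : 0 ≤ 2 * (r - (b + 1)) * ((m:ℝ) - r) / ((m:ℝ) * (2 * m - 2 * r + 1)) :=
      div_nonneg (by nlinarith) hden.le
    linarith
  · constructor
    · intro heq
      have hnum : 2 * (r - (b + 1)) * ((m:ℝ) - r) = 0 := by
        have : 2 * (r - (b + 1)) * ((m:ℝ) - r) / ((m:ℝ) * (2 * m - 2 * r + 1)) = 0 := by
          linarith [key]
        exact (div_eq_zero_iff.mp this).resolve_right hden.ne'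
      rcases mul_eq_zero.mp hnum with h | h
      · rcases mul_eq_zero.mp h with h | h
        · norm_num at h
        · left; linarith
      · right; linarith
    · rintro (rfl | h)
      · have : e₂ (b+1) - a₂ (b+1) = 0 := by rw [key]; ring
        linarith
      · subst h
        have : e₂ (m:ℝ) - a₂ (m:ℝ) = 0 := by rw [key]; ring
        linarith
end
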